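/- Let S be a submonoid of a polycyclic-by-finite group with group of quotients G = SS⁻¹, and assume S satisfies the ascending chain condition on right ideals. Let H be a torsion free normal subgroup of finite index in G such that S ∩ H is G-invariant. If Q is a prime ideal of S ∩ H, then there exists a prime ideal P of S such that P ∩ H = Q ∩ Q₂ ∩ ⋯ ∩ Q_m, where Q, Q₂, …, Q_m are all the prime ideals of S ∩ H minimal over P ∩ H (one says that P lies over Q); moreover each Qᵢ = gᵢ⁻¹Qgᵢ for some gᵢ ∈ G. -/

import Mathlib

open scoped Pointwise

universe u v

section GroupMonoidDefs

variable {G : Type u} [Group G]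

/-- `G` is the group of (two-sided) quotients of the submonoid `S`. -/
def IsGroupOfQuotients (S : Submonoid G) : Prop :=
  ∀ g : G, ∃ s ∈ S, ∃ t ∈ S, g = s * t⁻¹

/-- the set of quotients `s * t⁻¹` of elements of a submonoid. -/
def quotSet (S : Submonoid G) : Set G :=
  {g : G | ∃ s ∈ S, ∃ t ∈ S, g = s * t⁻¹}

/-- a subset of a group closed under conjugation by all group elements. -/
def IsGInvariant (X : Set G) : Prop :=
  ∀ g : G, ∀ x ∈ X, g * x * g⁻¹ ∈ X

/-- the conjugacy class of an element. -/
def conjClassSet (x : G) : Set G :=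
  {y : G | ∃ g : G, y = g * x * g⁻¹}

/-- right ideal of a submonoid, given as a subset of the ambient group. -/
def IsRightIdealOfSubmonoid (S : Submonoid G) (I : Set G) : Prop :=
  I.Nonempty ∧ I ⊆ (S : Set G) ∧ ∀ x ∈ I, ∀ s ∈ S, x * s ∈ I

/-- ascending chain condition on right ideals of a submonoid. -/
def ACCRightIdeals (S : Submonoid G) : Prop :=
  ∀ f : ℕ → Set G, (∀ n, IsRightIdealOfSubmonoid S (f n)) →
    (∀ n, f n ⊆ f (n + 1)) → ∃ N, ∀ n, N ≤ n → f n = f N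

/-- (two-sided) ideal of a submonoid. -/
def IsIdealOfSubmonoid (S : Submonoid G) (I : Set G) : Prop :=
  I.Nonempty ∧ I ⊆ (S : Set G) ∧ ∀ s ∈ S, ∀ x ∈ I, ∀ t ∈ S, s * x * t ∈ I

/-- prime ideal of a submonoid. -/
def IsPrimeIdealOfSubmonoid (S : Submonoid G) (P : Set G) : Prop :=
  IsIdealOfSubmonoid S P ∧ P ≠ (S : Set G) ∧
    ∀ I J : Set G, IsIdealOfSubmonoid S I → IsIdealOfSubmonoid S J →
      I * J ⊆ P → I ⊆ P ∨ J ⊆ P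

/-- minimal prime ideal of a submonoid. -/
def IsMinimalPrimeOfSubmonoid (S : Submonoid G) (P : Set G) : Prop :=
  IsPrimeIdealOfSubmonoid S P ∧
    ∀ Q : Set G, IsPrimeIdealOfSubmonoid S Q → Q ⊆ P → Q = P

/-- prime ideal of a submonoid which is minimal over the subset `I`. -/
def IsMinimalPrimeOver (S : Submonoid G) (I Q : Set G) : Prop :=
  IsPrimeIdealOfSubmonoid S Q ∧ I ⊆ Q ∧
    ∀ Q' : Set G, IsPrimeIdealOfSubmonoid S Q' → I ⊆ Q' → Q' ⊆ Q → Q' = Q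

/-- `P`, a prime ideal of `S`, lies over `Q`, a prime ideal of `S ∩ H`:
`Q` is minimal over `P ∩ H` and `P ∩ H` is the intersection of all primes of
`S ∩ H` minimal over `P ∩ H`. -/
def LiesOver (S : Submonoid G) (H : Subgroup G) (P Q : Set G) : Prop :=
  IsPrimeIdealOfSubmonoid S P ∧
  IsMinimalPrimeOver (S ⊓ H.toSubmonoid) (P ∩ (H : Set G)) Q ∧
  P ∩ (H : Set G) =
    ⋂₀ {Q' : Set G | IsMinimalPrimeOver (S ⊓ H.toSubmonoid) (P ∩ (H : Set G)) Q'}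

/-- the unit group of a submonoid of a group, as a subgroup. -/
def unitGroup (S : Submonoid G) : Subgroup G where
  carrier := {g : G | g ∈ S ∧ g⁻¹ ∈ S}
  one_mem' := ⟨S.one_mem, by simpa using S.one_mem⟩
  mul_mem' := by
    intro a b ha hb
    exact ⟨S.mul_mem ha.1 hb.1, by
      rw [mul_inv_rev]; exact S.mul_mem hb.2 ha.2⟩
  inv_mem' := by
    intro a ha
    exact ⟨ha.2, by simpa using ha.1⟩

/-- `S` is a maximal order within its group of quotients. -/
def IsMaximalOrderWithin (S : Submonoid G) : Prop :=
  ∀ T : Submonoid G, S ≤ T → (T : Set G) ⊆ quotSet S →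
    (∃ a ∈ quotSet S, ∃ b ∈ quotSet S, ∀ t ∈ T, a * t * b ∈ S) → T = S

/-- a chain `∅ = Q₀ ⊂ Q₁ ⊂ ⋯ ⊂ Qₙ` of prime ideals of `S` (of length `n`). -/
def HasMonoidDimChain (S : Submonoid G) (n : ℕ) : Prop :=
  ∃ c : Fin (n + 1) → Set G, c 0 = ∅ ∧
    (∀ i : Fin (n + 1), i ≠ 0 → IsPrimeIdealOfSubmonoid S (c i)) ∧
    ∀ i j : Fin (n + 1), i < j → c i ⊂ c j

/-- the prime dimension of the monoid `S` equals `n`. -/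
def MonoidDimEq (S : Submonoid G) (n : ℕ) : Prop :=
  HasMonoidDimChain S n ∧ ¬ HasMonoidDimChain S (n + 1)

/-- a chain `∅ = Q₀ ⊂ Q₁ ⊂ ⋯ ⊂ Qₙ = P` of prime ideals ending at `P`. -/
def HasMonoidHeightChain (S : Submonoid G) (P : Set G) (n : ℕ) : Prop :=
  ∃ c : Fin (n + 1) → Set G, c 0 = ∅ ∧ c (Fin.last n) = P ∧
    (∀ i : Fin (n + 1), i ≠ 0 → IsPrimeIdealOfSubmonoid S (c i)) ∧
    ∀ i j : Fin (n + 1), i < j → c i ⊂ c j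

/-- the height of the prime ideal `P` of `S` equals `n`. -/
def MonoidHeightEq (S : Submonoid G) (P : Set G) (n : ℕ) : Prop :=
  HasMonoidHeightChain S P n ∧ ¬ HasMonoidHeightChain S P (n + 1)

/-- a chain `Q₀ ⊂ ⋯ ⊂ Qₙ` of primes of `S` containing `P`; this corresponds to a
chain of primes of the Rees quotient `S/P` (including its zero ideal). -/
def HasDimChainOver (S : Submonoid G) (P : Set G) (n : ℕ) : Prop :=
  ∃ c : Fin (n + 1) → Set G,
    (∀ i, IsPrimeIdealOfSubmonoid S (c i) ∧ P ⊆ c i) ∧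
    ∀ i j : Fin (n + 1), i < j → c i ⊂ c j

/-- the prime dimension of the Rees quotient `S/P` equals `n`. -/
def DimOverEq (S : Submonoid G) (P : Set G) (n : ℕ) : Prop :=
  HasDimChainOver S P n ∧ ¬ HasDimChainOver S P (n + 1)

/-- the Rees quotient `S/P` contains a free abelian subsemigroup of rank `k`. -/
def HasFreeAbelianInRank (S : Submonoid G) (P : Set G) (k : ℕ) : Prop :=
  ∃ x : Fin k → G, (∀ i, x i ∈ S ∧ x i ∉ P) ∧
    (∀ i j, x i * x j = x j * x i) ∧
    (∀ m : Fin k → ℕ, m ≠ 0 → (List.ofFn fun i => x i ^ m i).prod ∉ P) ∧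
    ∀ m m' : Fin k → ℕ,
      (List.ofFn fun i => x i ^ m i).prod = (List.ofFn fun i => x i ^ m' i).prod → m = m'

/-- the rank of the Rees quotient monoid `S/P` equals `r`. -/
def ReesRankEq (S : Submonoid G) (P : Set G) (r : ℕ) : Prop :=
  HasFreeAbelianInRank S P r ∧ ¬ HasFreeAbelianInRank S P (r + 1)

/-- the factor `B/A` is a cyclic group, generated by the image of some `x ∈ B`. -/
def FactorCyclic (A B : Subgroup G) : Prop :=
  ∃ x ∈ B, ∀ y ∈ B, ∃ k : ℤ, (x ^ k)⁻¹ * y ∈ A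

/-- the factor `B/A` is an infinite cyclic group. -/
def FactorInfiniteCyclic (A B : Subgroup G) : Prop :=
  ∃ x ∈ B, (∀ y ∈ B, ∃ k : ℤ, (x ^ k)⁻¹ * y ∈ A) ∧ ∀ k : ℤ, x ^ k ∈ A → k = 0

end GroupMonoidDefs

/-- a group is polycyclic-by-finite: it has a subnormal series with each factor
cyclic or finite. -/
def IsPolycyclicByFinite (G : Type u) [Group G] : Prop :=
  ∃ (n : ℕ) (c : Fin (n + 1) → Subgroup G),
    c 0 = ⊥ ∧ c (Fin.last n) = ⊤ ∧
    ∀ i : Fin n, c i.castSucc ≤ c i.succ ∧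
      (∀ x ∈ c i.succ, ∀ y ∈ c i.castSucc, x * y * x⁻¹ ∈ c i.castSucc) ∧
      (FactorCyclic (c i.castSucc) (c i.succ) ∨ (c i.castSucc).relIndex (c i.succ) ≠ 0)

/-- a group is poly-(infinite cyclic): it has a subnormal series with each factor
infinite cyclic. -/
def IsPolyInfiniteCyclicGroup (G : Type u) [Group G] : Prop :=
  ∃ (n : ℕ) (c : Fin (n + 1) → Subgroup G),
    c 0 = ⊥ ∧ c (Fin.last n) = ⊤ ∧
    ∀ i : Fin n, c i.castSucc ≤ c i.succ ∧
      (∀ x ∈ c i.succ, ∀ y ∈ c i.castSucc, x * y * x⁻¹ ∈ c i.castSucc) ∧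
      FactorInfiniteCyclic (c i.castSucc) (c i.succ)

/-- a group is abelian-by-finite: it has an abelian normal subgroup of finite index. -/
def IsAbelianByFinite (G : Type u) [Group G] : Prop :=
  ∃ A : Subgroup G, A.Normal ∧ A.FiniteIndex ∧ ∀ x ∈ A, ∀ y ∈ A, x * y = y * x

/-- `Δ⁺(G)`: the set of periodic elements having finitely many conjugates. -/
def deltaPlusSet (G : Type u) [Group G] : Set G :=
  {g : G | (∃ n : ℕ, 0 < n ∧ g ^ n = 1) ∧ (conjClassSet g).Finite}

/-- a group is dihedral free if the normalizer of every infinite dihedral subgroup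
has infinite index. -/
def IsDihedralFree (G : Type u) [Group G] : Prop :=
  ∀ D : Subgroup G, Nonempty (D ≃* DihedralGroup 0) → (Subgroup.normalizer (D : Set G)).index = 0

/-- the torsion-free rank of a (finitely generated abelian-by-finite) group:
the rank of a free abelian subgroup of finite index. -/
def HasTorsionFreeRank (G : Type u) [Group G] (r : ℕ) : Prop :=
  ∃ A : Subgroup G, A.FiniteIndex ∧ Nonempty (A ≃* Multiplicative (Fin r → ℤ))

/-- `B/A` is a plinth section of `G`: a nontrivial torsion-free abelian section
which is rationally irreducible under every subgroup of finite index of `G`. -/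
def IsPlinthSection (G : Type u) [Group G] (A B : Subgroup G) : Prop :=
  A < B ∧
  (∀ x ∈ B, ∀ y ∈ B, x * y * x⁻¹ * y⁻¹ ∈ A) ∧
  (∀ x ∈ B, ∀ n : ℕ, 0 < n → x ^ n ∈ A → x ∈ A) ∧
  ∀ W : Subgroup G, W.FiniteIndex →
    ∀ C : Subgroup G, A ≤ C → C ≤ B →
      (∀ w ∈ W, ∀ c ∈ C, w * c * w⁻¹ ∈ C) →
      (C = A ∨ ∀ x ∈ B, ∃ n : ℕ, 0 < n ∧ x ^ n ∈ C)

/-- the plinth length of `G` equals `p`: some finite index subgroup `G₀` has a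
series whose factors are finite or plinths, with exactly `p` plinth factors. -/
def PlinthLengthEq (G : Type u) [Group G] (p : ℕ) : Prop :=
  ∃ G₀ : Subgroup G, G₀.FiniteIndex ∧
    ∃ (n : ℕ) (c : Fin (n + 1) → Subgroup G) (pl : Fin n → Bool),
      c 0 = ⊥ ∧ c (Fin.last n) = G₀ ∧
      (∀ i : Fin n, c i.castSucc ≤ c i.succ) ∧
      (∀ i : Fin (n + 1), ∀ g ∈ G₀, ∀ x ∈ c i, g * x * g⁻¹ ∈ c i) ∧
      (∀ i : Fin n,
        (pl i = true → IsPlinthSection G (c i.castSucc) (c i.succ)) ∧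
        (pl i = false → (c i.castSucc).relIndex (c i.succ) ≠ 0)) ∧
      (Finset.univ.filter fun i => pl i = true).card = p

/-- (two-sided) ideal of an abstract monoid. -/
def IsIdealOfMonoid (M : Type u) [Monoid M] (I : Set M) : Prop :=
  I.Nonempty ∧ ∀ s x t : M, x ∈ I → s * x * t ∈ I

/-- prime ideal of an abstract monoid. -/
def IsPrimeIdealOfMonoid (M : Type u) [Monoid M] (P : Set M) : Prop :=
  IsIdealOfMonoid M P ∧ P ≠ Set.univ ∧
    ∀ I J : Set M, IsIdealOfMonoid M I → IsIdealOfMonoid M J →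
      I * J ⊆ P → I ⊆ P ∨ J ⊆ P

/-- a realization of a group of (two-sided) quotients of a monoid `S`. -/
structure GroupOfQuotientsRealization (S : Type u) [Monoid S] : Type (u + 1) where
  carrier : Type u
  [grp : Group carrier]
  emb : S →* carrier
  inj : Function.Injective emb
  quot : ∀ g : carrier, ∃ s t : S, g = emb s * (emb t)⁻¹

section RingDefs

/-- two-sided ideal of a ring, as a set. -/
def IsTwoSidedIdealSet (R : Type u) [Ring R] (I : Set R) : Prop :=
  (0 : R) ∈ I ∧ (∀ x ∈ I, ∀ y ∈ I, x + y ∈ I) ∧ (∀ x ∈ I, -x ∈ I) ∧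
    ∀ r : R, ∀ x ∈ I, r * x ∈ I ∧ x * r ∈ I

/-- prime two-sided ideal of a (possibly noncommutative) ring. -/
def IsPrimeTwoSidedIdeal (R : Type u) [Ring R] (P : Set R) : Prop :=
  IsTwoSidedIdealSet R P ∧ P ≠ Set.univ ∧
    ∀ a b : R, (∀ r : R, a * r * b ∈ P) → a ∈ P ∨ b ∈ P

/-- a prime ring. -/
def IsPrimeRing (R : Type u) [Ring R] : Prop :=
  ∀ a b : R, (∀ r : R, a * r * b = 0) → a = 0 ∨ b = 0

/-- a chain `P₀ ⊂ ⋯ ⊂ Pₙ = P` of prime two-sided ideals ending at `P`. -/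
def HasPrimeChainTo (R : Type u) [Ring R] (P : Set R) (n : ℕ) : Prop :=
  ∃ c : Fin (n + 1) → Set R, (∀ i, IsPrimeTwoSidedIdeal R (c i)) ∧
    (∀ i j : Fin (n + 1), i < j → c i ⊂ c j) ∧ c (Fin.last n) = P

/-- the height of the prime two-sided ideal `P` equals `n`. -/
def RingHeightEq (R : Type u) [Ring R] (P : Set R) (n : ℕ) : Prop :=
  HasPrimeChainTo R P n ∧ ¬ HasPrimeChainTo R P (n + 1)

/-- a chain `P₀ ⊂ ⋯ ⊂ Pₙ` of prime two-sided ideals of `R`. -/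
def HasRingPrimeChain (R : Type u) [Ring R] (n : ℕ) : Prop :=
  ∃ c : Fin (n + 1) → Set R, (∀ i, IsPrimeTwoSidedIdeal R (c i)) ∧
    ∀ i j : Fin (n + 1), i < j → c i ⊂ c j

/-- the classical Krull dimension of `R` equals `n`. -/
def ClKdimEq (R : Type u) [Ring R] (n : ℕ) : Prop :=
  HasRingPrimeChain R n ∧ ¬ HasRingPrimeChain R (n + 1)

/-- a prime two-sided ideal minimal over the set `I`. -/
def IsMinimalPrimeOverRing (R : Type u) [Ring R] (I P : Set R) : Prop :=
  IsPrimeTwoSidedIdeal R P ∧ I ⊆ P ∧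
    ∀ P' : Set R, IsPrimeTwoSidedIdeal R P' → I ⊆ P' → P' ⊆ P → P' = P

/-- `f : R →+* Q` realizes `Q` as the classical (two-sided) quotient ring of `R`. -/
def IsClassicalQuotientRing {R Q : Type u} [Ring R] [Ring Q] (f : R →+* Q) : Prop :=
  Function.Injective f ∧
  (∀ r : R, IsRegular r → IsUnit (f r)) ∧
  (∀ q : Q, ∃ r s : R, IsRegular s ∧ q * f s = f r) ∧
  (∀ q : Q, ∃ r s : R, IsRegular s ∧ f s * q = f r)

/-- `R` is a maximal order: for every realization of its classical quotient ring `Q`,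
there is no intermediate ring `R ⊆ T ⊆ Q` with `aTb ⊆ R` for regular `a b ∈ Q`
other than (the image of) `R` itself. -/
def IsRingMaximalOrder (R : Type u) [Ring R] : Prop :=
  ∀ (Q : Type u) [Ring Q], ∀ f : R →+* Q, IsClassicalQuotientRing f →
    ∀ T : Subring Q, (∀ r : R, f r ∈ T) →
      (∃ a b : Q, IsRegular a ∧ IsRegular b ∧
        ∀ t ∈ T, ∃ r : R, a * t * b = f r) →
      ∀ t ∈ T, ∃ r : R, t = f r

/-- `R` satisfies a polynomial identity: a monic noncommutative polynomial with
integer coefficients vanishing identically on `R`. -/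
def IsPIRing (R : Type u) [Ring R] : Prop :=
  ∃ (n : ℕ) (f : MonoidAlgebra ℤ (FreeMonoid (Fin n))),
    (∃ w : FreeMonoid (Fin n), f.coeff w = 1 ∧
      ∀ w' : FreeMonoid (Fin n), f.coeff w' ≠ 0 →
        (FreeMonoid.toList w').length ≤ (FreeMonoid.toList w).length) ∧
    ∀ v : Fin n → R,
      (MonoidAlgebra.lift (R := ℤ) (M := FreeMonoid (Fin n)) (A := R)) (FreeMonoid.lift v) f = 0

end RingDefs

/-- the `K`-linear span `K[Q]` of a subset `Q` of a monoid `M` inside `K[M]`. -/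
def monoidSpan (K : Type u) [Field K] {M : Type v} [Monoid M] (Q : Set M) :
    Set (MonoidAlgebra K M) :=
  ↑(Submodule.span K ((fun m : M => (MonoidAlgebra.of K M m : MonoidAlgebra K M)) '' Q))

/-- the `K`-linear span `K[Q]` of a subset `Q ⊆ S` inside the semigroup algebra `K[S]`. -/
def submonoidSpan (K : Type u) [Field K] {G : Type v} [Group G] (S : Submonoid G)
    (Q : Set G) : Set (MonoidAlgebra K ↥S) :=
  ↑(Submodule.span K
      ((fun s : ↥S => (MonoidAlgebra.of K ↥S s : MonoidAlgebra K ↥S)) ''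
        {s : ↥S | (s : G) ∈ Q}))

section JOAux

variable {G : Type u} [Group G]

/-- conjugation image. -/
def joaCj (g : G) (I : Set G) : Set G := (fun x => g⁻¹ * x * g) '' I

/-- T-padded principal set. -/
def joaPad (S : Submonoid G) (H : Subgroup G) (y : G) : Set G :=
  {z | ∃ t1 t2 : G, (t1 ∈ S ∧ t1 ∈ H) ∧ (t2 ∈ S ∧ t2 ∈ H) ∧ z = t1 * y * t2}

/-- iterated padded product. -/
def joaProd (S : Submonoid G) (H : Subgroup G) (f : G → G) : List G → Set G
  | [] => {(1 : G)}
  | b :: r => joaPad S H (f b) * joaProd S H f r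

theorem joa_memT {S : Submonoid G} {H : Subgroup G} {x : G} :
    x ∈ S ⊓ H.toSubmonoid ↔ x ∈ S ∧ x ∈ H := by
  simp [Submonoid.mem_inf]

theorem joa_memTc {S : Submonoid G} {H : Subgroup G} {x : G} :
    x ∈ ((S ⊓ H.toSubmonoid : Submonoid G) : Set G) ↔ x ∈ S ∧ x ∈ H := by
  rw [SetLike.mem_coe]; exact joa_memT

theorem joa_ideal_mk {S : Submonoid G} {H : Subgroup G} {I : Set G}
    (h1 : I.Nonempty) (h2 : ∀ x ∈ I, x ∈ S ∧ x ∈ H)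
    (h3 : ∀ s x t : G, s ∈ S ∧ s ∈ H → x ∈ I → t ∈ S ∧ t ∈ H → s * x * t ∈ I) :
    IsIdealOfSubmonoid (S ⊓ H.toSubmonoid) I :=
  ⟨h1, fun x hx => joa_memTc.mpr (h2 x hx),
    fun s hs x hx t ht => h3 s x t (joa_memT.mp hs) hx (joa_memT.mp ht)⟩

theorem joa_ideal_memSH {S : Submonoid G} {H : Subgroup G} {I : Set G}
    (hI : IsIdealOfSubmonoid (S ⊓ H.toSubmonoid) I) {x : G} (hx : x ∈ I) :
    x ∈ S ∧ x ∈ H := joa_memTc.mp (hI.2.1 hx)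

theorem joa_ideal_pad {S : Submonoid G} {H : Subgroup G} {I : Set G}
    (hI : IsIdealOfSubmonoid (S ⊓ H.toSubmonoid) I) {s x t : G}
    (hs : s ∈ S ∧ s ∈ H) (hx : x ∈ I) (ht : t ∈ S ∧ t ∈ H) : s * x * t ∈ I :=
  hI.2.2 s (joa_memT.mpr hs) x hx t (joa_memT.mpr ht)

theorem joa_ideal_padl {S : Submonoid G} {H : Subgroup G} {I : Set G}
    (hI : IsIdealOfSubmonoid (S ⊓ H.toSubmonoid) I) {s x : G}
    (hs : s ∈ S ∧ s ∈ H) (hx : x ∈ I) : s * x ∈ I := by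
  have := joa_ideal_pad hI hs hx ⟨S.one_mem, H.one_mem⟩
  rwa [mul_one] at this

theorem joa_ideal_padr {S : Submonoid G} {H : Subgroup G} {I : Set G}
    (hI : IsIdealOfSubmonoid (S ⊓ H.toSubmonoid) I) {x t : G}
    (hx : x ∈ I) (ht : t ∈ S ∧ t ∈ H) : x * t ∈ I := by
  have := joa_ideal_pad hI ⟨S.one_mem, H.one_mem⟩ hx ht
  rwa [one_mul] at this

theorem joa_ideal_one {S : Submonoid G} {H : Subgroup G} {I : Set G}
    (hI : IsIdealOfSubmonoid (S ⊓ H.toSubmonoid) I) (h1 : (1 : G) ∈ I) :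
    I = ((S ⊓ H.toSubmonoid : Submonoid G) : Set G) := by
  apply Set.Subset.antisymm hI.2.1
  intro x hx
  have hx' := joa_memTc.mp hx
  have h2 := joa_ideal_pad hI hx' h1 ⟨S.one_mem, H.one_mem⟩
  simpa using h2

theorem joa_prime_one_nmem {S : Submonoid G} {H : Subgroup G} {P : Set G}
    (hP : IsPrimeIdealOfSubmonoid (S ⊓ H.toSubmonoid) P) : (1 : G) ∉ P :=
  fun h => hP.2.1 (joa_ideal_one hP.1 h)

theorem joa_conj {S : Submonoid G} {H : Subgroup G}
    (hinv : IsGInvariant ((S : Set G) ∩ (H : Set G))) (g : G) {x : G}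
    (hx : x ∈ S ∧ x ∈ H) : g * x * g⁻¹ ∈ S ∧ g * x * g⁻¹ ∈ H := by
  have h := hinv g x ⟨hx.1, hx.2⟩
  exact ⟨h.1, h.2⟩

theorem joa_conjInv {S : Submonoid G} {H : Subgroup G}
    (hinv : IsGInvariant ((S : Set G) ∩ (H : Set G))) (g : G) {x : G}
    (hx : x ∈ S ∧ x ∈ H) : g⁻¹ * x * g ∈ S ∧ g⁻¹ * x * g ∈ H := by
  have h := joa_conj hinv g⁻¹ hx
  rwa [inv_inv] at h

theorem joa_cj_mem {I : Set G} {g y : G} : y ∈ joaCj g I ↔ g * y * g⁻¹ ∈ I := by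
  constructor
  · rintro ⟨x, hx, rfl⟩
    have h : g * (g⁻¹ * x * g) * g⁻¹ = x := by group
    rwa [h]
  · intro h
    exact ⟨g * y * g⁻¹, h, by group⟩

theorem joa_cj_one (I : Set G) : joaCj 1 I = I := by
  ext y
  constructor
  · rintro ⟨x, hx, rfl⟩; simpa using hx
  · intro hy; exact ⟨y, hy, by group⟩

theorem joa_cj_cj (g k : G) (I : Set G) : joaCj g (joaCj k I) = joaCj (k * g) I := by
  ext y
  rw [joa_cj_mem, joa_cj_mem, joa_cj_mem]
  constructor <;> intro h
  · have e : (k * g) * y * (k * g)⁻¹ = k * (g * y * g⁻¹) * k⁻¹ := by group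
    rwa [e]
  · have e : k * (g * y * g⁻¹) * k⁻¹ = (k * g) * y * (k * g)⁻¹ := by group
    rwa [e]

theorem joa_cj_mono {g : G} {I J : Set G} (h : I ⊆ J) : joaCj g I ⊆ joaCj g J :=
  Set.image_mono h

theorem joa_cj_mul (g : G) (A B : Set G) : joaCj g A * joaCj g B = joaCj g (A * B) := by
  ext z
  constructor
  · intro hz
    rw [Set.mem_mul] at hz
    obtain ⟨x, hx, y, hy, rfl⟩ := hz
    rcases hx with ⟨a, ha, rfl⟩
    rcases hy with ⟨b, hb, rfl⟩
    exact ⟨a * b, Set.mul_mem_mul ha hb, by group⟩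
  · rintro ⟨w, hw, rfl⟩
    rw [Set.mem_mul] at hw
    obtain ⟨a, ha, b, hb, rfl⟩ := hw
    rw [Set.mem_mul]
    exact ⟨g⁻¹ * a * g, ⟨a, ha, rfl⟩, g⁻¹ * b * g, ⟨b, hb, rfl⟩, by group⟩

theorem joa_cj_ideal {S : Submonoid G} {H : Subgroup G}
    (hinv : IsGInvariant ((S : Set G) ∩ (H : Set G))) (g : G) {I : Set G}
    (hI : IsIdealOfSubmonoid (S ⊓ H.toSubmonoid) I) :
    IsIdealOfSubmonoid (S ⊓ H.toSubmonoid) (joaCj g I) := by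
  obtain ⟨x0, hx0⟩ := hI.1
  refine joa_ideal_mk ⟨g⁻¹ * x0 * g, x0, hx0, rfl⟩ ?_ ?_
  · intro y hy
    have h1 := joa_ideal_memSH hI (joa_cj_mem.mp hy)
    have h2 := joa_conjInv hinv g h1
    have h3 : g⁻¹ * (g * y * g⁻¹) * g = y := by group
    rwa [h3] at h2
  · intro s y t hs hy ht
    rw [joa_cj_mem] at hy ⊢
    have h4 : g * (s * y * t) * g⁻¹ = (g * s * g⁻¹) * (g * y * g⁻¹) * (g * t * g⁻¹) := by group
    rw [h4]
    exact joa_ideal_pad hI (joa_conj hinv g hs) hy (joa_conj hinv g ht)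

theorem joa_cj_prime {S : Submonoid G} {H : Subgroup G}
    (hinv : IsGInvariant ((S : Set G) ∩ (H : Set G))) (g : G) {R : Set G}
    (hR : IsPrimeIdealOfSubmonoid (S ⊓ H.toSubmonoid) R) :
    IsPrimeIdealOfSubmonoid (S ⊓ H.toSubmonoid) (joaCj g R) := by
  refine ⟨joa_cj_ideal hinv g hR.1, ?_, ?_⟩
  · intro hEq
    apply joa_prime_one_nmem hR
    have h1 : (1 : G) ∈ joaCj g R := by
      rw [hEq]; exact joa_memTc.mpr ⟨S.one_mem, H.one_mem⟩
    have h2 := joa_cj_mem.mp h1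
    simpa using h2
  · intro I J hI hJ hIJ
    have h2 : joaCj g⁻¹ I * joaCj g⁻¹ J ⊆ R := by
      rw [joa_cj_mul]
      rintro z ⟨w, hw, rfl⟩
      have h3 := hIJ hw
      rw [joa_cj_mem] at h3
      simpa using h3
    rcases hR.2.2 _ _ (joa_cj_ideal hinv g⁻¹ hI) (joa_cj_ideal hinv g⁻¹ hJ) h2 with h | h
    · left
      intro y hy
      rw [joa_cj_mem]
      have h5 : (g⁻¹)⁻¹ * y * g⁻¹ ∈ R := h ⟨y, hy, rfl⟩
      simpa using h5
    · right
      intro y hy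
      rw [joa_cj_mem]
      have h5 : (g⁻¹)⁻¹ * y * g⁻¹ ∈ R := h ⟨y, hy, rfl⟩
      simpa using h5

theorem joa_acc_chain {S : Submonoid G} {H : Subgroup G} (hacc : ACCRightIdeals S)
    (I : ℕ → Set G) (hid : ∀ n, IsIdealOfSubmonoid (S ⊓ H.toSubmonoid) (I n))
    (hmono : ∀ n, I n ⊆ I (n + 1)) : ∃ N, I N = I (N + 1) := by
  set f : ℕ → Set G := fun n => {z | ∃ x ∈ I n, ∃ s ∈ S, z = x * s} with hf
  have hri : ∀ n, IsRightIdealOfSubmonoid S (f n) := by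
    intro n
    obtain ⟨x0, hx0⟩ := (hid n).1
    refine ⟨⟨x0 * 1, x0, hx0, 1, S.one_mem, rfl⟩, ?_, ?_⟩
    · rintro z ⟨x, hx, s, hs, rfl⟩
      exact S.mul_mem (joa_ideal_memSH (hid n) hx).1 hs
    · rintro z ⟨x, hx, s, hs, rfl⟩ s' hs'
      exact ⟨x, hx, s * s', S.mul_mem hs hs', mul_assoc _ _ _⟩
  have hfm : ∀ n, f n ⊆ f (n + 1) := by
    rintro n z ⟨x, hx, s, hs, rfl⟩
    exact ⟨x, hmono n hx, s, hs, rfl⟩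
  obtain ⟨N, hN⟩ := hacc f hri hfm
  refine ⟨N, ?_⟩
  have key : ∀ n, I n = {z | z ∈ f n ∧ z ∈ H} := by
    intro n
    ext z
    constructor
    · intro hz
      exact ⟨⟨z, hz, 1, S.one_mem, (mul_one z).symm⟩, (joa_ideal_memSH (hid n) hz).2⟩
    · rintro ⟨⟨x, hx, s, hs, rfl⟩, hzH⟩
      have hxSH := joa_ideal_memSH (hid n) hx
      have hsH : s ∈ H := by
        have e : s = x⁻¹ * (x * s) := by group
        rw [e]
        exact H.mul_mem (H.inv_mem hxSH.2) hzH
      exact joa_ideal_padr (hid n) hx ⟨hs, hsH⟩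
  rw [key N, key (N + 1), hN (N + 1) (Nat.le_succ N)]

theorem joa_incomp {S : Submonoid G} {H : Subgroup G}
    (hinv : IsGInvariant ((S : Set G) ∩ (H : Set G))) (hacc : ACCRightIdeals S)
    {Q : Set G} (hQI : IsIdealOfSubmonoid (S ⊓ H.toSubmonoid) Q) {a b : G}
    (hab : joaCj a Q ⊆ joaCj b Q) : joaCj a Q = joaCj b Q := by
  set w : G := b * a⁻¹ with hw
  have e0 : a * a⁻¹ = 1 := by group
  have hQw : Q ⊆ joaCj w Q := by
    have h1 := joa_cj_mono (g := a⁻¹) hab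
    rw [joa_cj_cj, joa_cj_cj, e0, joa_cj_one] at h1
    exact h1
  have hchain : ∀ n, joaCj (w ^ n) Q ⊆ joaCj (w ^ (n + 1)) Q := by
    intro n
    induction n with
    | zero => simpa [pow_zero, pow_one, joa_cj_one] using hQw
    | succ n ih =>
      have h2 := joa_cj_mono (g := w) ih
      rw [joa_cj_cj, joa_cj_cj, ← pow_succ, ← pow_succ] at h2
      exact h2
  obtain ⟨N, hN⟩ := joa_acc_chain hacc (fun n => joaCj (w ^ n) Q)
    (fun n => joa_cj_ideal hinv _ hQI) hchain
  have h3 := congrArg (joaCj ((w ^ N)⁻¹)) hN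
  rw [joa_cj_cj, joa_cj_cj] at h3
  have e1 : w ^ N * (w ^ N)⁻¹ = 1 := by group
  have e2 : w ^ (N + 1) * (w ^ N)⁻¹ = w := by group
  rw [e1, e2, joa_cj_one] at h3
  have h4 : joaCj b Q = joaCj a Q := by
    have e3 : b = w * a := by rw [hw]; group
    calc joaCj b Q = joaCj (w * a) Q := by rw [← e3]
    _ = joaCj a (joaCj w Q) := (joa_cj_cj a w Q).symm
    _ = joaCj a Q := by rw [← h3]
  exact h4.symm

theorem joa_cover_coset {S : Submonoid G} {H : Subgroup G} (hacc : ACCRightIdeals S)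
    (c : G ⧸ H) :
    ∃ l : List G, ∀ s : G, s ∈ S → QuotientGroup.mk s = c →
      ∃ a ∈ l, a ∈ S ∧ ∃ u : G, (u ∈ S ∧ u ∈ H) ∧ s = a * u := by
  by_contra hno
  have key : ∀ l : List G, ∃ s : G, s ∈ S ∧ QuotientGroup.mk s = c ∧
      ∀ a ∈ l, ¬(a ∈ S ∧ ∃ u : G, (u ∈ S ∧ u ∈ H) ∧ s = a * u) := by
    intro l
    by_contra hk
    push_neg at hk
    apply hno
    refine ⟨l, fun s hs hc => ?_⟩
    obtain ⟨a, hal, h⟩ := hk s hs hc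
    exact ⟨a, hal, h⟩
  set pick : List G → G := fun l => (key l).choose with hpick
  have pickS : ∀ l, pick l ∈ S := fun l => (key l).choose_spec.1
  have pickc : ∀ l, QuotientGroup.mk (pick l) = c := fun l => (key l).choose_spec.2.1
  have pickav : ∀ l, ∀ a ∈ l, ¬(a ∈ S ∧ ∃ u : G, (u ∈ S ∧ u ∈ H) ∧ pick l = a * u) :=
    fun l => (key l).choose_spec.2.2
  set L : ℕ → List G := fun n => Nat.rec [] (fun _ ih => pick ih :: ih) n with hL
  have hLsucc : ∀ n, L (n + 1) = pick (L n) :: L n := fun n => rfl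
  have hLmem : ∀ n, ∀ a ∈ L n, a ∈ S ∧ QuotientGroup.mk a = c := by
    intro n
    induction n with
    | zero => intro a ha; exact absurd ha List.not_mem_nil
    | succ n ih =>
      intro a ha
      rw [hLsucc] at ha
      rcases List.mem_cons.mp ha with rfl | h
      · exact ⟨pickS _, pickc _⟩
      · exact ih a h
  set f : ℕ → Set G := fun n => {z | ∃ a ∈ L (n + 1), ∃ s ∈ S, z = a * s} with hfdef
  have hri : ∀ n, IsRightIdealOfSubmonoid S (f n) := by
    intro n
    refine ⟨⟨pick (L n) * 1, pick (L n), by rw [hLsucc]; exact List.mem_cons_self,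
      1, S.one_mem, rfl⟩, ?_, ?_⟩
    · rintro z ⟨a, ha, s, hs, rfl⟩
      exact S.mul_mem (hLmem (n + 1) a ha).1 hs
    · rintro z ⟨a, ha, s, hs, rfl⟩ s' hs'
      exact ⟨a, ha, s * s', S.mul_mem hs hs', mul_assoc _ _ _⟩
  have hfm : ∀ n, f n ⊆ f (n + 1) := by
    rintro n z ⟨a, ha, s, hs, rfl⟩
    refine ⟨a, ?_, s, hs, rfl⟩
    have h9 := List.mem_cons_of_mem (pick (L (n + 1))) ha
    rwa [← hLsucc (n + 1)] at h9
  obtain ⟨N, hN⟩ := hacc f hri hfm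
  have hstab : f (N + 1) = f N := hN (N + 1) (Nat.le_succ N)
  have hin : pick (L (N + 1)) ∈ f (N + 1) := by
    refine ⟨pick (L (N + 1)), ?_, 1, S.one_mem, (mul_one _).symm⟩
    have h9 := List.mem_cons_self (a := pick (L (N + 1))) (l := L (N + 1))
    rwa [← hLsucc (N + 1)] at h9
  rw [hstab] at hin
  obtain ⟨a, haL, s, hsS, heq⟩ := hin
  have haS := (hLmem (N + 1) a haL).1
  have hac := (hLmem (N + 1) a haL).2
  have hsH : s ∈ H := by
    have h5 : (QuotientGroup.mk a : G ⧸ H) = QuotientGroup.mk (pick (L (N + 1))) :=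
      hac.trans (pickc _).symm
    have h6 := QuotientGroup.eq.mp h5
    have h7 : s = a⁻¹ * pick (L (N + 1)) := by rw [heq]; group
    rw [h7]; exact h6
  exact pickav (L (N + 1)) a haL ⟨haS, s, ⟨hsS, hsH⟩, heq⟩

theorem joa_cover {S : Submonoid G} {H : Subgroup G} (hacc : ACCRightIdeals S)
    (hfi : H.FiniteIndex) :
    ∃ l : List G, ∀ s : G, s ∈ S →
      ∃ a ∈ l, a ∈ S ∧ ∃ u : G, (u ∈ S ∧ u ∈ H) ∧ s = a * u := by
  have hfin : Finite (G ⧸ H) := Nat.finite_of_card_ne_zero hfi.index_ne_zero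
  haveI := Fintype.ofFinite (G ⧸ H)
  choose lc hlc using fun c : G ⧸ H => joa_cover_coset (S := S) (H := H) hacc c
  refine ⟨(Finset.univ : Finset (G ⧸ H)).toList.flatMap lc, ?_⟩
  intro s hs
  obtain ⟨a, hal, h⟩ := hlc (QuotientGroup.mk s) s hs rfl
  exact ⟨a, List.mem_flatMap.mpr ⟨_, Finset.mem_toList.mpr (Finset.mem_univ _), hal⟩, h⟩

theorem joa_pad_ideal {S : Submonoid G} {H : Subgroup G} {y : G} (hy : y ∈ S ∧ y ∈ H) :
    IsIdealOfSubmonoid (S ⊓ H.toSubmonoid) (joaPad S H y) := by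
  refine joa_ideal_mk ⟨y, 1, 1, ⟨S.one_mem, H.one_mem⟩, ⟨S.one_mem, H.one_mem⟩, by simp⟩ ?_ ?_
  · rintro z ⟨t1, t2, ht1, ht2, rfl⟩
    exact ⟨S.mul_mem (S.mul_mem ht1.1 hy.1) ht2.1, H.mul_mem (H.mul_mem ht1.2 hy.2) ht2.2⟩
  · rintro s z t hs ⟨t1, t2, ht1, ht2, rfl⟩ ht
    exact ⟨s * t1, t2 * t, ⟨S.mul_mem hs.1 ht1.1, H.mul_mem hs.2 ht1.2⟩,
      ⟨S.mul_mem ht2.1 ht.1, H.mul_mem ht2.2 ht.2⟩, by group⟩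

theorem joa_pad_self {S : Submonoid G} {H : Subgroup G} (y : G) : y ∈ joaPad S H y :=
  ⟨1, 1, ⟨S.one_mem, H.one_mem⟩, ⟨S.one_mem, H.one_mem⟩, by simp⟩

theorem joa_mul_ideal {S : Submonoid G} {H : Subgroup G} {I J : Set G}
    (hI : IsIdealOfSubmonoid (S ⊓ H.toSubmonoid) I)
    (hJ : IsIdealOfSubmonoid (S ⊓ H.toSubmonoid) J) :
    IsIdealOfSubmonoid (S ⊓ H.toSubmonoid) (I * J) := by
  obtain ⟨x0, hx0⟩ := hI.1
  obtain ⟨y0, hy0⟩ := hJ.1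
  refine joa_ideal_mk ⟨x0 * y0, Set.mul_mem_mul hx0 hy0⟩ ?_ ?_
  · intro z hz
    rw [Set.mem_mul] at hz
    obtain ⟨x, hx, y, hy, rfl⟩ := hz
    have h1 := joa_ideal_memSH hI hx
    have h2 := joa_ideal_memSH hJ hy
    exact ⟨S.mul_mem h1.1 h2.1, H.mul_mem h1.2 h2.2⟩
  · intro s z t hs hz ht
    rw [Set.mem_mul] at hz
    obtain ⟨x, hx, y, hy, rfl⟩ := hz
    have e : s * (x * y) * t = (s * x) * (y * t) := by group
    rw [e]
    exact Set.mul_mem_mul (joa_ideal_padl hI hs hx) (joa_ideal_padr hJ hy ht)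

theorem joa_good_conj {S : Submonoid G} {H : Subgroup G} (hnorm : H.Normal)
    (hinv : IsGInvariant ((S : Set G) ∩ (H : Set G)))
    {Q : Set G} (hQ : IsPrimeIdealOfSubmonoid (S ⊓ H.toSubmonoid) Q)
    {x : G} (hxS : x ∈ S) (hxH : x ∈ H)
    (hcond : ∀ s t : G, s ∈ S → t ∈ S → s * x * t ∈ H → s * x * t ∈ Q)
    {a b : G} (haS : a ∈ S) (hbS : b ∈ S) (habH : a * b ∈ H) (habQ : a * b ∉ Q) :
    a * x * a⁻¹ ∈ Q := by
  have hya := joa_conj hinv a ⟨hxS, hxH⟩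
  have hab : a * b ∈ S ∧ a * b ∈ H := ⟨S.mul_mem haS hbS, habH⟩
  have hI := joa_pad_ideal (S := S) (H := H) hya
  have hJ := joa_pad_ideal (S := S) (H := H) hab
  have hsub : joaPad S H (a * x * a⁻¹) * joaPad S H (a * b) ⊆ Q := by
    intro z hz
    rw [Set.mem_mul] at hz
    obtain ⟨z1, hz1, z2, hz2, rfl⟩ := hz
    obtain ⟨t1, t2, ht1, ht2, rfl⟩ := hz1
    obtain ⟨t3, t4, ht3, ht4, rfl⟩ := hz2
    have hm := joa_conjInv hinv a ⟨S.mul_mem ht2.1 ht3.1, H.mul_mem ht2.2 ht3.2⟩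
    have hinner : a * x * ((a⁻¹ * (t2 * t3) * a) * b) ∈ Q := by
      apply hcond a _ haS (S.mul_mem hm.1 hbS)
      have e : a * x * ((a⁻¹ * (t2 * t3) * a) * b) = (a * x * a⁻¹) * ((t2 * t3) * (a * b)) := by
        group
      rw [e]
      exact H.mul_mem hya.2 (H.mul_mem (H.mul_mem ht2.2 ht3.2) habH)
    have hzeq : (t1 * (a * x * a⁻¹) * t2) * (t3 * (a * b) * t4) =
        t1 * (a * x * ((a⁻¹ * (t2 * t3) * a) * b)) * t4 := by group
    rw [hzeq]
    exact joa_ideal_pad hQ.1 ht1 hinner ht4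
  rcases hQ.2.2 _ _ hI hJ hsub with h | h
  · exact h (joa_pad_self _)
  · exact absurd (h (joa_pad_self _)) habQ

theorem joa_cond_of_good {S : Submonoid G} {H : Subgroup G} (hnorm : H.Normal)
    (hinv : IsGInvariant ((S : Set G) ∩ (H : Set G)))
    {Q : Set G} (hQ : IsPrimeIdealOfSubmonoid (S ⊓ H.toSubmonoid) Q)
    {l : List G}
    (hl : ∀ s : G, s ∈ S → ∃ a ∈ l, a ∈ S ∧ ∃ u : G, (u ∈ S ∧ u ∈ H) ∧ s = a * u)
    {x : G} (hxS : x ∈ S) (hxH : x ∈ H)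
    (hgood : ∀ a ∈ l, a ∈ S → (∃ b : G, b ∈ S ∧ a * b ∈ H ∧ a * b ∉ Q) → a * x * a⁻¹ ∈ Q) :
    ∀ s t : G, s ∈ S → t ∈ S → s * x * t ∈ H → s * x * t ∈ Q := by
  intro s t hs ht hH
  obtain ⟨a, hal, haS, u, hu, hsu⟩ := hl s hs
  obtain ⟨a', ha'l, ha'S, u', hu', htu⟩ := hl t ht
  have haa'H : a * a' ∈ H := by
    have h1 : a * a' = ((s * x * t) * u'⁻¹) * (a'⁻¹ * (x⁻¹ * u⁻¹) * a') := by
      rw [hsu, htu]; group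
    rw [h1]
    refine H.mul_mem (H.mul_mem hH (H.inv_mem hu'.2)) ?_
    have h2 : x⁻¹ * u⁻¹ ∈ H := H.mul_mem (H.inv_mem hxH) (H.inv_mem hu.2)
    have h3 := hnorm.conj_mem _ h2 a'⁻¹
    rwa [inv_inv] at h3
  have haxa' : a * x * a' ∈ Q := by
    have e2 : a * x * a' = (a * x * a⁻¹) * (a * a') := by group
    by_cases hq : a * a' ∈ Q
    · rw [e2]
      exact joa_ideal_padl hQ.1 (joa_conj hinv a ⟨hxS, hxH⟩) hq
    · have h3 := hgood a hal haS ⟨a', ha'S, haa'H, hq⟩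
      rw [e2]
      exact joa_ideal_padr hQ.1 h3 ⟨S.mul_mem haS ha'S, haa'H⟩
  have h4 : s * x * t = (a * u * a⁻¹) * (a * x * a') * u' := by rw [hsu, htu]; group
  rw [h4]
  exact joa_ideal_pad hQ.1 (joa_conj hinv a hu) haxa' hu'

theorem joa_prod_mem {S : Submonoid G} {H : Subgroup G} (f : G → G) :
    ∀ l' : List G, (∀ b ∈ l', f b ∈ S ∧ f b ∈ H) →
      (l'.map f).prod ∈ S ∧ (l'.map f).prod ∈ H := by
  intro l'
  induction l' with
  | nil => intro _; simpa using ⟨S.one_mem, H.one_mem⟩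
  | cons b r ih =>
    intro hf
    rw [List.map_cons, List.prod_cons]
    have h1 := hf b (List.mem_cons_self)
    have h2 := ih fun b' hb' => hf b' (List.mem_cons_of_mem _ hb')
    exact ⟨S.mul_mem h1.1 h2.1, H.mul_mem h1.2 h2.2⟩

theorem joa_prod_split {S : Submonoid G} {H : Subgroup G} (f : G → G) :
    ∀ l' : List G, (∀ b ∈ l', f b ∈ S ∧ f b ∈ H) → ∀ a ∈ l',
      ∃ u v : G, (u ∈ S ∧ u ∈ H) ∧ (v ∈ S ∧ v ∈ H) ∧ (l'.map f).prod = u * f a * v := by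
  intro l'
  induction l' with
  | nil => intro _ a ha; exact absurd ha List.not_mem_nil
  | cons b r ih =>
    intro hf a ha
    have hfb := hf b (List.mem_cons_self)
    have hfr : ∀ b' ∈ r, f b' ∈ S ∧ f b' ∈ H := fun b' hb' => hf b' (List.mem_cons_of_mem _ hb')
    rcases List.mem_cons.mp ha with rfl | har
    · refine ⟨1, (r.map f).prod, ⟨S.one_mem, H.one_mem⟩, joa_prod_mem f r hfr, ?_⟩
      rw [List.map_cons, List.prod_cons, one_mul]
    · obtain ⟨u, v, hu, hv, heq⟩ := ih hfr a har
      refine ⟨f b * u, v, ⟨S.mul_mem hfb.1 hu.1, H.mul_mem hfb.2 hu.2⟩, hv, ?_⟩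
      rw [List.map_cons, List.prod_cons, heq]
      group

theorem joa_joaProd_T {S : Submonoid G} {H : Subgroup G} (f : G → G) :
    ∀ l' : List G, (∀ b ∈ l', f b ∈ S ∧ f b ∈ H) →
      ∀ w ∈ joaProd S H f l', w ∈ S ∧ w ∈ H := by
  intro l'
  induction l' with
  | nil =>
    intro _ w hw
    rw [joaProd, Set.mem_singleton_iff] at hw
    subst hw
    exact ⟨S.one_mem, H.one_mem⟩
  | cons b r ih =>
    intro hf w hw
    rw [joaProd, Set.mem_mul] at hw
    obtain ⟨z, hz, w', hw', rfl⟩ := hw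
    obtain ⟨t1, t2, ht1, ht2, rfl⟩ := hz
    have hfb := hf b (List.mem_cons_self)
    have h1 : t1 * f b * t2 ∈ S ∧ t1 * f b * t2 ∈ H :=
      ⟨S.mul_mem (S.mul_mem ht1.1 hfb.1) ht2.1, H.mul_mem (H.mul_mem ht1.2 hfb.2) ht2.2⟩
    have h2 := ih (fun b' hb' => hf b' (List.mem_cons_of_mem _ hb')) w' hw'
    exact ⟨S.mul_mem h1.1 h2.1, H.mul_mem h1.2 h2.2⟩

theorem joa_joaProd_split {S : Submonoid G} {H : Subgroup G} (f : G → G) :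
    ∀ l' : List G, (∀ b ∈ l', f b ∈ S ∧ f b ∈ H) → ∀ a ∈ l', ∀ w ∈ joaProd S H f l',
      ∃ u v : G, (u ∈ S ∧ u ∈ H) ∧ (v ∈ S ∧ v ∈ H) ∧ w = u * f a * v := by
  intro l'
  induction l' with
  | nil => intro _ a ha; exact absurd ha List.not_mem_nil
  | cons b r ih =>
    intro hf a ha w hw
    rw [joaProd, Set.mem_mul] at hw
    obtain ⟨z, hz, w', hw', rfl⟩ := hw
    obtain ⟨t1, t2, ht1, ht2, rfl⟩ := hz
    have hfb := hf b (List.mem_cons_self)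
    have hfr : ∀ b' ∈ r, f b' ∈ S ∧ f b' ∈ H := fun b' hb' => hf b' (List.mem_cons_of_mem _ hb')
    have hw'T := joa_joaProd_T f r hfr w' hw'
    rcases List.mem_cons.mp ha with rfl | har
    · exact ⟨t1, t2 * w', ht1, ⟨S.mul_mem ht2.1 hw'T.1, H.mul_mem ht2.2 hw'T.2⟩, by group⟩
    · obtain ⟨u, v, hu, hv, heq⟩ := ih hfr a har w' hw'
      refine ⟨t1 * f b * t2 * u, v,
        ⟨S.mul_mem (S.mul_mem (S.mul_mem ht1.1 hfb.1) ht2.1) hu.1,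
         H.mul_mem (H.mul_mem (H.mul_mem ht1.2 hfb.2) ht2.2) hu.2⟩, hv, ?_⟩
      rw [heq]
      group

theorem joa_joaProd_ideal {S : Submonoid G} {H : Subgroup G} (f : G → G) :
    ∀ l' : List G, (∀ b ∈ l', f b ∈ S ∧ f b ∈ H) → l' ≠ [] →
      IsIdealOfSubmonoid (S ⊓ H.toSubmonoid) (joaProd S H f l') := by
  intro l'
  induction l' with
  | nil => intro _ h; exact absurd rfl h
  | cons b r ih =>
    intro hf _
    have hfb := hf b (List.mem_cons_self)
    have hfr : ∀ b' ∈ r, f b' ∈ S ∧ f b' ∈ H := fun b' hb' => hf b' (List.mem_cons_of_mem _ hb')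
    cases r with
    | nil =>
      have e : joaProd S H f [b] = joaPad S H (f b) := by
        rw [joaProd, joaProd]
        ext z
        simp [Set.mem_mul]
      rw [e]
      exact joa_pad_ideal hfb
    | cons b' r' =>
      rw [joaProd]
      exact joa_mul_ideal (joa_pad_ideal hfb) (ih hfr (List.cons_ne_nil _ _))

theorem joa_joaProd_absorb {S : Submonoid G} {H : Subgroup G} (f : G → G) {V : Set G}
    (hV : IsPrimeIdealOfSubmonoid (S ⊓ H.toSubmonoid) V) :
    ∀ l' : List G, (∀ b ∈ l', f b ∈ S ∧ f b ∈ H) → joaProd S H f l' ⊆ V →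
      (∃ b ∈ l', f b ∈ V) ∨ (1 : G) ∈ V := by
  intro l'
  induction l' with
  | nil =>
    intro _ hsub
    right
    exact hsub (by rw [joaProd]; exact Set.mem_singleton 1)
  | cons b r ih =>
    intro hf hsub
    have hfb := hf b (List.mem_cons_self)
    have hfr : ∀ b' ∈ r, f b' ∈ S ∧ f b' ∈ H := fun b' hb' => hf b' (List.mem_cons_of_mem _ hb')
    rw [joaProd] at hsub
    cases r with
    | nil =>
      left
      refine ⟨b, List.mem_cons_self, ?_⟩
      apply hsub
      rw [joaProd]
      exact Set.mem_mul.mpr ⟨f b, joa_pad_self _, 1, Set.mem_singleton 1, mul_one _⟩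
    | cons b' r' =>
      rcases hV.2.2 _ _ (joa_pad_ideal hfb) (joa_joaProd_ideal f (b' :: r') hfr
          (List.cons_ne_nil _ _)) hsub with h | h
      · left
        exact ⟨b, List.mem_cons_self, h (joa_pad_self _)⟩
      · rcases ih hfr h with ⟨b0, hb0, hfb0⟩ | h1
        · left
          exact ⟨b0, List.mem_cons_of_mem _ hb0, hfb0⟩
        · right
          exact h1

theorem joa_P_nonempty {S : Submonoid G} {H : Subgroup G} (hnorm : H.Normal)
    (hinv : IsGInvariant ((S : Set G) ∩ (H : Set G)))
    {Q : Set G} (hQ : IsPrimeIdealOfSubmonoid (S ⊓ H.toSubmonoid) Q)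
    {l : List G}
    (hl : ∀ s : G, s ∈ S → ∃ a ∈ l, a ∈ S ∧ ∃ u : G, (u ∈ S ∧ u ∈ H) ∧ s = a * u) :
    ∃ x : G, (x ∈ S ∧ x ∈ H) ∧
      ∀ s t : G, s ∈ S → t ∈ S → s * x * t ∈ H → s * x * t ∈ Q := by
  classical
  obtain ⟨qb, hqb⟩ := hQ.1.1
  have hqbSH := joa_ideal_memSH hQ.1 hqb
  set f : G → G := fun a =>
    if a ∈ S ∧ ∃ b : G, b ∈ S ∧ a * b ∈ H ∧ a * b ∉ Q then a⁻¹ * qb * a else 1 with hfdef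
  have hfT : ∀ a ∈ l, f a ∈ S ∧ f a ∈ H := by
    intro a _
    by_cases h : a ∈ S ∧ ∃ b : G, b ∈ S ∧ a * b ∈ H ∧ a * b ∉ Q
    · rw [hfdef]; simp only [if_pos h]; exact joa_conjInv hinv a hqbSH
    · rw [hfdef]; simp only [if_neg h]; exact ⟨S.one_mem, H.one_mem⟩
  have hxSH := joa_prod_mem f l hfT
  refine ⟨(l.map f).prod, hxSH, ?_⟩
  apply joa_cond_of_good hnorm hinv hQ hl hxSH.1 hxSH.2
  intro a hal haS hgood
  obtain ⟨u, v, hu, hv, heq⟩ := joa_prod_split f l hfT a hal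
  have hfa : f a = a⁻¹ * qb * a := by rw [hfdef]; exact if_pos ⟨haS, hgood⟩
  have e : a * (l.map f).prod * a⁻¹ = (a * u * a⁻¹) * qb * (a * v * a⁻¹) := by
    rw [heq, hfa]; group
  rw [e]
  exact joa_ideal_pad hQ.1 (joa_conj hinv a hu) hqb (joa_conj hinv a hv)

theorem joa_absorb {S : Submonoid G} {H : Subgroup G} (hnorm : H.Normal)
    (hinv : IsGInvariant ((S : Set G) ∩ (H : Set G)))
    {Q : Set G} (hQ : IsPrimeIdealOfSubmonoid (S ⊓ H.toSubmonoid) Q)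
    {l : List G}
    (hl : ∀ s : G, s ∈ S → ∃ a ∈ l, a ∈ S ∧ ∃ u : G, (u ∈ S ∧ u ∈ H) ∧ s = a * u)
    {V : Set G} (hV : IsPrimeIdealOfSubmonoid (S ⊓ H.toSubmonoid) V)
    (hPHV : ∀ x : G, (x ∈ S ∧ x ∈ H) →
      (∀ s t : G, s ∈ S → t ∈ S → s * x * t ∈ H → s * x * t ∈ Q) → x ∈ V) :
    ∃ b : G, (b ∈ S ∧ ∃ b' : G, b' ∈ S ∧ b * b' ∈ H ∧ b * b' ∉ Q) ∧ joaCj b Q ⊆ V := by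
  classical
  by_contra hcon
  push_neg at hcon
  set f : G → G := fun b => if h : ∃ z, z ∈ joaCj b Q ∧ z ∉ V then h.choose else 1 with hfdef
  have hone : (1 : G) ∉ V := joa_prime_one_nmem hV
  have hfT : ∀ b : G, f b ∈ S ∧ f b ∈ H := by
    intro b
    rw [hfdef]
    by_cases h : ∃ z, z ∈ joaCj b Q ∧ z ∉ V
    · simp only [dif_pos h]
      have hz := h.choose_spec.1
      have h1 := joa_ideal_memSH hQ.1 (joa_cj_mem.mp hz)
      have h2 := joa_conjInv hinv b h1
      have e : b⁻¹ * (b * h.choose * b⁻¹) * b = h.choose := by group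
      rwa [e] at h2
    · simp only [dif_neg h]; exact ⟨S.one_mem, H.one_mem⟩
  have hfgood : ∀ b : G, (b ∈ S ∧ ∃ b' : G, b' ∈ S ∧ b * b' ∈ H ∧ b * b' ∉ Q) →
      f b ∈ joaCj b Q ∧ f b ∉ V := by
    intro b hb
    have hns := hcon b hb
    rw [Set.not_subset] at hns
    obtain ⟨z, hz1, hz2⟩ := hns
    have h : ∃ z, z ∈ joaCj b Q ∧ z ∉ V := ⟨z, hz1, hz2⟩
    rw [hfdef]
    simp only [dif_pos h]
    exact h.choose_spec
  have hfTl : ∀ b ∈ l, f b ∈ S ∧ f b ∈ H := fun b _ => hfT b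
  have hsubV : joaProd S H f l ⊆ V := by
    intro w hw
    have hwT := joa_joaProd_T f l hfTl w hw
    apply hPHV w hwT
    apply joa_cond_of_good hnorm hinv hQ hl hwT.1 hwT.2
    intro a hal haS hgood
    obtain ⟨u, v, hu, hv, heq⟩ := joa_joaProd_split f l hfTl a hal w hw
    have hfa := hfgood a ⟨haS, hgood⟩
    have hfaQ := joa_cj_mem.mp hfa.1
    have e : a * w * a⁻¹ = (a * u * a⁻¹) * (a * f a * a⁻¹) * (a * v * a⁻¹) := by
      rw [heq]; group
    rw [e]
    exact joa_ideal_pad hQ.1 (joa_conj hinv a hu) hfaQ (joa_conj hinv a hv)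
  rcases joa_joaProd_absorb f hV l hfTl hsubV with ⟨b, _, hbV⟩ | h1
  · by_cases h : ∃ z, z ∈ joaCj b Q ∧ z ∉ V
    · have e : f b = h.choose := by rw [hfdef]; simp only [dif_pos h]
      exact h.choose_spec.2 (e ▸ hbV)
    · have e : f b = 1 := by rw [hfdef]; simp only [dif_neg h]
      exact hone (e ▸ hbV)
  · exact hone h1

end JOAux

/-- lying over — every prime `Q` of `S ∩ H` has a prime `P` of `S`
lying over it, and the minimal primes over `P ∩ H` are conjugates of `Q`. -/
theorem exists_prime_lying_over
    {G : Type u} [Group G] (S : Submonoid G)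
    (hpoly : IsPolycyclicByFinite G)
    (hquot : IsGroupOfQuotients S)
    (hacc : ACCRightIdeals S)
    (H : Subgroup G) (hnorm : H.Normal) (hfi : H.FiniteIndex)
    (htf : ∀ h ∈ H, ∀ n : ℕ, 0 < n → h ^ n = 1 → h = 1)
    (hinv : IsGInvariant ((S : Set G) ∩ (H : Set G)))
    (Q : Set G) (hQ : IsPrimeIdealOfSubmonoid (S ⊓ H.toSubmonoid) Q) :
    ∃ P : Set G, LiesOver S H P Q ∧
      ∀ Q' : Set G,
        IsMinimalPrimeOver (S ⊓ H.toSubmonoid) (P ∩ (H : Set G)) Q' →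
        ∃ g : G, Q' = (fun x => g⁻¹ * x * g) '' Q := by
  classical
  obtain ⟨l, hl⟩ := joa_cover (S := S) (H := H) hacc hfi
  set P : Set G :=
    {x | x ∈ S ∧ ∀ s t : G, s ∈ S → t ∈ S → s * x * t ∈ H → s * x * t ∈ Q} with hPdef
  have hPH_mem : ∀ x : G, x ∈ P ∩ (H : Set G) ↔ ((x ∈ S ∧ x ∈ H) ∧
      ∀ s t : G, s ∈ S → t ∈ S → s * x * t ∈ H → s * x * t ∈ Q) := by
    intro x
    constructor
    · rintro ⟨⟨h1, hc⟩, hH⟩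
      exact ⟨⟨h1, hH⟩, hc⟩
    · rintro ⟨⟨h1, hH⟩, hc⟩
      exact ⟨⟨h1, hc⟩, hH⟩
  have hPHsubQ : P ∩ (H : Set G) ⊆ Q := by
    intro x hx
    obtain ⟨hxSH, hc⟩ := (hPH_mem x).mp hx
    have h2 := hc 1 1 S.one_mem S.one_mem (by simpa using hxSH.2)
    simpa using h2
  have hVint : ∀ V : Set G, P ∩ (H : Set G) ⊆ V → ∀ x : G, (x ∈ S ∧ x ∈ H) →
      (∀ s t : G, s ∈ S → t ∈ S → s * x * t ∈ H → s * x * t ∈ Q) → x ∈ V :=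
    fun V hV x h1 h2 => hV ((hPH_mem x).mpr ⟨h1, h2⟩)
  have hPideal : IsIdealOfSubmonoid S P := by
    obtain ⟨x, hxSH, hc⟩ := joa_P_nonempty hnorm hinv hQ hl
    refine ⟨⟨x, hxSH.1, hc⟩, fun y hy => hy.1, ?_⟩
    intro s hs y hy t ht
    refine ⟨S.mul_mem (S.mul_mem hs hy.1) ht, ?_⟩
    intro s' t' hs' ht' hH
    have e : s' * (s * y * t) * t' = (s' * s) * y * (t * t') := by group
    rw [e] at hH ⊢
    exact hy.2 _ _ (S.mul_mem hs' hs) (S.mul_mem ht ht') hH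
  have hPne : P ≠ (S : Set G) := by
    intro hEq
    have h1 : (1 : G) ∈ P := by rw [hEq]; simpa using S.one_mem
    have h2 := h1.2 1 1 S.one_mem S.one_mem (by simpa using H.one_mem)
    simp only [one_mul, mul_one] at h2
    exact joa_prime_one_nmem hQ h2
  have hPprime : IsPrimeIdealOfSubmonoid S P := by
    refine ⟨hPideal, hPne, ?_⟩
    intro I J hI hJ hIJ
    by_contra hc
    push_neg at hc
    obtain ⟨hcI, hcJ⟩ := hc
    rw [Set.not_subset] at hcI hcJ
    obtain ⟨x', hx'I, hx'P⟩ := hcI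
    obtain ⟨y', hy'J, hy'P⟩ := hcJ
    have hx'S : x' ∈ S := hI.2.1 hx'I
    have hy'S : y' ∈ S := hJ.2.1 hy'J
    have hx'cond : ∃ s t : G, s ∈ S ∧ t ∈ S ∧ s * x' * t ∈ H ∧ s * x' * t ∉ Q := by
      by_contra hno
      push_neg at hno
      exact hx'P ⟨hx'S, fun s t hs ht hH => hno s t hs ht hH⟩
    have hy'cond : ∃ s t : G, s ∈ S ∧ t ∈ S ∧ s * y' * t ∈ H ∧ s * y' * t ∉ Q := by
      by_contra hno
      push_neg at hno
      exact hy'P ⟨hy'S, fun s t hs ht hH => hno s t hs ht hH⟩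
    obtain ⟨s0, t0, hs0, ht0, hwH, hwQ⟩ := hx'cond
    obtain ⟨s1, t1, hs1, ht1, hzH, hzQ⟩ := hy'cond
    have hwI : s0 * x' * t0 ∈ I := hI.2.2 s0 hs0 x' hx'I t0 ht0
    have hzJ : s1 * y' * t1 ∈ J := hJ.2.2 s1 hs1 y' hy'J t1 ht1
    have hwSH : s0 * x' * t0 ∈ S ∧ s0 * x' * t0 ∈ H := ⟨hI.2.1 hwI, hwH⟩
    have hzSH : s1 * y' * t1 ∈ S ∧ s1 * y' * t1 ∈ H := ⟨hJ.2.1 hzJ, hzH⟩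
    have hsub : joaPad S H (s0 * x' * t0) * joaPad S H (s1 * y' * t1) ⊆ Q := by
      intro q hq
      rw [Set.mem_mul] at hq
      obtain ⟨q1, hq1, q2, hq2, rfl⟩ := hq
      obtain ⟨t1', t2', ht1', ht2', rfl⟩ := hq1
      obtain ⟨t3', t4', ht3', ht4', rfl⟩ := hq2
      have hmemI : t1' * (s0 * x' * t0) * (t2' * t3') ∈ I :=
        hI.2.2 t1' ht1'.1 _ hwI (t2' * t3') (S.mul_mem ht2'.1 ht3'.1)
      have hmemJ : (s1 * y' * t1) * t4' ∈ J := by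
        have h5 := hJ.2.2 1 S.one_mem _ hzJ t4' ht4'.1
        rwa [one_mul] at h5
      have e : (t1' * (s0 * x' * t0) * t2') * (t3' * (s1 * y' * t1) * t4') =
          (t1' * (s0 * x' * t0) * (t2' * t3')) * ((s1 * y' * t1) * t4') := by group
      have hPmem : (t1' * (s0 * x' * t0) * t2') * (t3' * (s1 * y' * t1) * t4') ∈ P := by
        apply hIJ
        rw [e]
        exact Set.mul_mem_mul hmemI hmemJ
      have hHm : (t1' * (s0 * x' * t0) * t2') * (t3' * (s1 * y' * t1) * t4') ∈ H :=
        H.mul_mem (H.mul_mem (H.mul_mem ht1'.2 hwH) ht2'.2)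
          (H.mul_mem (H.mul_mem ht3'.2 hzH) ht4'.2)
      exact hPHsubQ ⟨hPmem, hHm⟩
    rcases hQ.2.2 _ _ (joa_pad_ideal hwSH) (joa_pad_ideal hzSH) hsub with h | h
    · exact hwQ (h (joa_pad_self _))
    · exact hzQ (h (joa_pad_self _))
  have hCmin : ∀ b : G, (b ∈ S ∧ ∃ b' : G, b' ∈ S ∧ b * b' ∈ H ∧ b * b' ∉ Q) →
      IsMinimalPrimeOver (S ⊓ H.toSubmonoid) (P ∩ (H : Set G)) (joaCj b Q) := by
    intro b hb
    refine ⟨joa_cj_prime hinv b hQ, ?_, ?_⟩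
    · intro x hx
      obtain ⟨hxSH, hc⟩ := (hPH_mem x).mp hx
      obtain ⟨hbS, b', hb'S, hbH, hbQ⟩ := hb
      exact joa_cj_mem.mpr (joa_good_conj hnorm hinv hQ hxSH.1 hxSH.2 hc hbS hb'S hbH hbQ)
    · intro V hVp hPV hVC
      obtain ⟨b0, _, hb0sub⟩ := joa_absorb hnorm hinv hQ hl hVp (hVint V hPV)
      have h1 : joaCj b0 Q ⊆ joaCj b Q := hb0sub.trans hVC
      have h2 := joa_incomp hinv hacc hQ.1 h1
      apply Set.Subset.antisymm hVC
      rw [← h2]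
      exact hb0sub
  have h1good : (1 : G) ∈ S ∧ ∃ b' : G, b' ∈ S ∧ 1 * b' ∈ H ∧ 1 * b' ∉ Q := by
    refine ⟨S.one_mem, 1, S.one_mem, by simpa using H.one_mem, ?_⟩
    simpa using joa_prime_one_nmem hQ
  have hQmin : IsMinimalPrimeOver (S ⊓ H.toSubmonoid) (P ∩ (H : Set G)) Q := by
    have h3 := hCmin 1 h1good
    rwa [joa_cj_one] at h3
  have hsInter : P ∩ (H : Set G) =
      ⋂₀ {Q' : Set G | IsMinimalPrimeOver (S ⊓ H.toSubmonoid) (P ∩ (H : Set G)) Q'} := by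
    apply Set.Subset.antisymm
    · intro x hx
      rw [Set.mem_sInter]
      intro Q' hQ'
      exact hQ'.2.1 hx
    · intro x hx
      rw [Set.mem_sInter] at hx
      have hxQ : x ∈ Q := hx Q hQmin
      have hxSH := joa_ideal_memSH hQ.1 hxQ
      refine (hPH_mem x).mpr ⟨hxSH, ?_⟩
      apply joa_cond_of_good hnorm hinv hQ hl hxSH.1 hxSH.2
      intro a hal haS hgood
      have hx_a : x ∈ joaCj a Q := hx (joaCj a Q) (hCmin a ⟨haS, hgood⟩)
      exact joa_cj_mem.mp hx_a
  refine ⟨P, ⟨hPprime, hQmin, hsInter⟩, ?_⟩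
  intro Q' hQ'
  obtain ⟨b0, hb0good, hb0sub⟩ := joa_absorb hnorm hinv hQ hl hQ'.1 (hVint Q' hQ'.2.1)
  refine ⟨b0, ?_⟩
  have h6 := hQ'.2.2 (joaCj b0 Q) (joa_cj_prime hinv b0 hQ) ((hCmin b0 hb0good).2.1) hb0sub
  exact h6.symm
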